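/- Let f ∈ F^coord_{0,(L₁,L₂)}(ℝ^d) with two blocks and let K ≥ 2. Let (x_i)_{i=0,…,2K} be the iterates of K cycles of 2-block alternating minimization: at each step i with active block ℓ alternating between 1 and 2, x_i minimizes f over the affine subspace {x_{i−1} + U_ℓ h : h ∈ ℝ^{d_ℓ}}. Suppose x_* is a global minimizer of f and R_a > 0 satisfies ‖x_{2k} − x_*‖ ≤ R_a for every k ∈ {1,…,K}. Then f(x_{2K}) − f(x_*) ≤ 2 min{L₁, L₂} R_a² / (K − 1). -/

import Mathlib

open RealInnerProductSpace

noncomputable section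

/-- The `ℓ`-th block `ℝ^{d_ℓ}` of the decomposition `ℝ^d = ℝ^{d_1} × … × ℝ^{d_p}`. -/
abbrev Blk {p : ℕ} (d : Fin p → ℕ) (ℓ : Fin p) : Type := EuclideanSpace ℝ (Fin (d ℓ))

/-- The space `ℝ^d = ℝ^{d_1} × … × ℝ^{d_p}` with the Euclidean (ℓ²) norm. -/
abbrev Sp {p : ℕ} (d : Fin p → ℕ) : Type := PiLp 2 (Blk d)

/-- The selection embedding `U_ℓ : ℝ^{d_ℓ} → ℝ^d` placing `h` in block `ℓ` and `0` elsewhere. -/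
def inj {p : ℕ} (d : Fin p → ℕ) (ℓ : Fin p) (h : Blk d ℓ) : Sp d :=
  (WithLp.equiv 2 (∀ ℓ, Blk d ℓ)).symm (Pi.single ℓ h)

/-- Membership in the class `F^coord_{0,L}(ℝ^d)`: convex, differentiable, and for each block
`ℓ` the partial gradient `∇^{(ℓ)} f` is `L_ℓ`-Lipschitz along the block `ℓ`. -/
def IsCoordSmooth {p : ℕ} (d : Fin p → ℕ) (L : Fin p → ℝ) (f : Sp d → ℝ) : Prop :=
  ConvexOn ℝ Set.univ f ∧ Differentiable ℝ f ∧
    ∀ (ℓ : Fin p) (x : Sp d) (h : Blk d ℓ),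
      ‖gradient f (x + inj d ℓ h) ℓ - gradient f x ℓ‖ ≤ L ℓ * ‖h‖

/-- Block index used at step `i` (steps counted from `0`) of `2`-block alternating
minimization: the two blocks alternate. -/
def blkIdx2 (i : ℕ) : Fin 2 := ⟨i % 2, Nat.mod_lt i (by norm_num)⟩

namespace AMRateAux

variable {p : ℕ} {d : Fin p → ℕ}

lemma inj_apply (ℓ : Fin p) (h : Blk d ℓ) (i : Fin p) : inj d ℓ h i = Pi.single ℓ h i := rfl

lemma inj_apply_ne {ℓ i : Fin p} (hi : i ≠ ℓ) (h : Blk d ℓ) : inj d ℓ h i = 0 := by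
  rw [inj_apply, Pi.single_eq_of_ne hi]

lemma inj_smul (ℓ : Fin p) (t : ℝ) (h : Blk d ℓ) : inj d ℓ (t • h) = t • inj d ℓ h := by
  unfold inj; rw [Pi.single_smul]; rfl

lemma inj_add (ℓ : Fin p) (a b : Blk d ℓ) : inj d ℓ (a + b) = inj d ℓ a + inj d ℓ b := by
  unfold inj; rw [Pi.single_add]; rfl

lemma inj_zero (ℓ : Fin p) : inj d ℓ (0 : Blk d ℓ) = 0 := by
  unfold inj; rw [Pi.single_zero]; rfl

lemma inner_inj (y : Sp d) (ℓ : Fin p) (h : Blk d ℓ) : ⟪y, inj d ℓ h⟫ = ⟪y ℓ, h⟫ := by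
  rw [PiLp.inner_apply, Finset.sum_eq_single ℓ]
  · rw [inj_apply, Pi.single_eq_same]
  · intro i _ hi
    rw [inj_apply_ne hi, inner_zero_right]
  · simp

lemma norm_apply_le (y : Sp d) (ℓ : Fin p) : ‖y ℓ‖ ≤ ‖y‖ := by
  have h1 : ‖y ℓ‖ ^ 2 ≤ ‖y‖ ^ 2 := by
    rw [← real_inner_self_eq_norm_sq, ← real_inner_self_eq_norm_sq, PiLp.inner_apply]
    exact Finset.single_le_sum (f := fun i => ⟪y i, y i⟫)
      (fun i _ => real_inner_self_nonneg) (Finset.mem_univ ℓ)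
  nlinarith [norm_nonneg (y ℓ), norm_nonneg y]

lemma hasDerivAt_line {f : Sp d → ℝ} (hf : Differentiable ℝ f) (x v : Sp d) (t : ℝ) :
    HasDerivAt (fun s : ℝ => f (x + s • v)) ⟪gradient f (x + t • v), v⟫ t := by
  have h1 : HasFDerivAt f ((InnerProductSpace.toDual ℝ (Sp d)) (gradient f (x + t • v)))
      (x + t • v) := hasGradientAt_iff_hasFDerivAt.mp (hf (x + t • v)).hasGradientAt
  have h2 : HasDerivAt (fun s : ℝ => x + s • v) v t := by
    simpa using ((hasDerivAt_id t).smul_const v).const_add x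
  simpa [InnerProductSpace.toDual_apply_apply, Function.comp_def] using h1.comp_hasDerivAt t h2

lemma convex_lower {f : Sp d → ℝ} (hconv : ConvexOn ℝ Set.univ f)
    (hdiff : Differentiable ℝ f) (x y : Sp d) :
    f x + ⟪gradient f x, y - x⟫ ≤ f y := by
  set φ : ℝ → ℝ := fun t => f (x + t • (y - x)) with hφ
  have hder : HasDerivAt φ ⟪gradient f x, y - x⟫ 0 := by
    simpa using hasDerivAt_line hdiff x (y - x) 0
  have hφc : ConvexOn ℝ Set.univ φ := by
    have h2 := hconv.comp_affineMap (AffineMap.lineMap x y : ℝ →ᵃ[ℝ] Sp d)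
    have he : φ = f ∘ (AffineMap.lineMap x y : ℝ →ᵃ[ℝ] Sp d) := by
      funext t
      simp only [hφ, Function.comp_apply, AffineMap.lineMap_apply_module]
      congr 1
      module
    rw [he]
    simpa using h2
  have hs := hφc.le_slope_of_hasDerivAt (Set.mem_univ (0:ℝ)) (Set.mem_univ (1:ℝ)) one_pos hder
  have e1 : φ 1 = f y := by simp [hφ]
  have e0 : φ 0 = f x := by simp [hφ]
  rw [slope_def_field, e1, e0, sub_zero, div_one] at hs
  linarith

lemma descent {f : Sp d → ℝ} (hdiff : Differentiable ℝ f) {Lc : ℝ} (ℓ : Fin p)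
    (hlip : ∀ (z : Sp d) (h : Blk d ℓ),
      ‖gradient f (z + inj d ℓ h) ℓ - gradient f z ℓ‖ ≤ Lc * ‖h‖)
    (x : Sp d) (h : Blk d ℓ) :
    f (x + inj d ℓ h) ≤ f x + ⟪gradient f x ℓ, h⟫ + Lc / 2 * ‖h‖ ^ 2 := by
  set v := inj d ℓ h with hv
  set c : ℝ := ⟪gradient f x ℓ, h⟫ with hc
  set ψ : ℝ → ℝ := fun t => f (x + t • v) - t * c - Lc * ‖h‖ ^ 2 * t ^ 2 / 2 with hψ
  have hd : ∀ t : ℝ, HasDerivAt ψ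
      (⟪gradient f (x + t • v) ℓ, h⟫ - c - Lc * ‖h‖ ^ 2 * t) t := by
    intro t
    have h1 := hasDerivAt_line hdiff x v t
    rw [hv, inner_inj] at h1
    have h2 : HasDerivAt (fun t : ℝ => t * c) c t := by
      simpa using (hasDerivAt_id t).mul_const c
    have h3 : HasDerivAt (fun t : ℝ => Lc * ‖h‖ ^ 2 * t ^ 2 / 2) (Lc * ‖h‖ ^ 2 * t) t := by
      have := ((hasDerivAt_pow 2 t).const_mul (Lc * ‖h‖ ^ 2)).div_const 2
      refine this.congr_deriv ?_
      ring
    exact (h1.sub h2).sub h3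
  have hcont : Continuous ψ := by
    have : Differentiable ℝ ψ := fun t => (hd t).differentiableAt
    exact this.continuous
  have hmono : AntitoneOn ψ (Set.Icc 0 1) := by
    apply antitoneOn_of_deriv_nonpos (convex_Icc 0 1) hcont.continuousOn
      (fun t _ => (hd t).differentiableAt.differentiableWithinAt)
    intro t ht
    rw [interior_Icc] at ht
    rw [(hd t).deriv]
    have key : ⟪gradient f (x + t • v) ℓ - gradient f x ℓ, h⟫ ≤ Lc * (t * ‖h‖) * ‖h‖ := by
      calc ⟪gradient f (x + t • v) ℓ - gradient f x ℓ, h⟫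
          ≤ ‖gradient f (x + t • v) ℓ - gradient f x ℓ‖ * ‖h‖ := real_inner_le_norm _ _
        _ ≤ (Lc * ‖t • h‖) * ‖h‖ := by
            apply mul_le_mul_of_nonneg_right _ (norm_nonneg h)
            have := hlip x (t • h)
            rwa [inj_smul, ← hv] at this
        _ = Lc * (|t| * ‖h‖) * ‖h‖ := by rw [norm_smul]; norm_num
        _ = Lc * (t * ‖h‖) * ‖h‖ := by rw [abs_of_pos ht.1]
    rw [inner_sub_left] at key
    rw [hc]
    nlinarith [key]
  have h01 := hmono (Set.left_mem_Icc.mpr zero_le_one) (Set.right_mem_Icc.mpr zero_le_one)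
    zero_le_one
  simp only [hψ, one_smul, zero_smul, add_zero, one_pow, mul_one, zero_mul, zero_pow,
    mul_zero, sub_zero, zero_div, one_mul] at h01
  rw [hv, hc] at h01
  linarith

lemma grad_zero {f : Sp d → ℝ} (hdiff : Differentiable ℝ f) (ℓ : Fin p) (y : Sp d)
    (hm : ∀ h : Blk d ℓ, f y ≤ f (y + inj d ℓ h)) : gradient f y ℓ = 0 := by
  set G := gradient f y ℓ with hG
  have hloc : IsLocalMin (fun t : ℝ => f (y + t • inj d ℓ G)) 0 := by
    apply Filter.Eventually.of_forall
    intro t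
    simp only [zero_smul, add_zero]
    rw [← inj_smul]
    exact hm (t • G)
  have hder := hasDerivAt_line hdiff y (inj d ℓ G) 0
  simp only [zero_smul, add_zero] at hder
  have h0 := hloc.hasDerivAt_eq_zero hder
  rw [inner_inj, ← hG] at h0
  exact inner_self_eq_zero.mp h0

lemma blkIdx2_two_mul (k : ℕ) : blkIdx2 (2 * k) = 0 := by
  apply Fin.ext
  simp [blkIdx2, Nat.mul_mod_right]

lemma blkIdx2_two_mul_add_one (k : ℕ) : blkIdx2 (2 * k + 1) = 1 := by
  apply Fin.ext
  simp [blkIdx2]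

lemma arith {a b C : ℝ} (ha : 0 < a) (hb : 0 < b) (hC : 0 < C) (hba : b ≤ a)
    (hdec : a ^ 2 / C ≤ a - b) : 1 / a + 1 / C ≤ 1 / b := by
  have h1 : a ^ 2 ≤ C * (a - b) := by
    rw [div_le_iff₀ hC] at hdec
    linarith [hdec]
  have h2 : a * b ≤ a ^ 2 := by nlinarith
  rw [div_add_div _ _ (ne_of_gt ha) (ne_of_gt hC), div_le_div_iff₀ (by positivity) hb]
  nlinarith

end AMRateAux

open AMRateAux in
theorem alternating_minimization_rate {d : Fin 2 → ℕ} (L : Fin 2 → ℝ)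
    (hL : ∀ ℓ, 0 < L ℓ) (f : Sp d → ℝ) (hf : IsCoordSmooth d L f)
    (K : ℕ) (hK : 2 ≤ K) (x : ℕ → Sp d)
    (hstep : ∀ i < 2 * K,
      (∃ h : Blk d (blkIdx2 i), x (i + 1) = x i + inj d (blkIdx2 i) h) ∧
      IsMinOn f {z : Sp d | ∃ h : Blk d (blkIdx2 i), z = x i + inj d (blkIdx2 i) h} (x (i + 1)))
    (xstar : Sp d) (hmin : IsMinOn f Set.univ xstar)
    (Ra : ℝ) (hRa : 0 < Ra)
    (hbound : ∀ k : ℕ, 1 ≤ k → k ≤ K → ‖x (2 * k) - xstar‖ ≤ Ra) :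
    f (x (2 * K)) - f xstar ≤ 2 * min (L 0) (L 1) * Ra ^ 2 / ((K : ℝ) - 1) := by
  obtain ⟨hconv, hdiff, hlip⟩ := hf
  have hKR : (2:ℝ) ≤ (K:ℝ) := by exact_mod_cast hK
  have hKpos : (0:ℝ) < (K:ℝ) - 1 := by linarith
  have hmin2 : 0 < min (L 0) (L 1) := lt_min (hL 0) (hL 1)
  set δ : ℕ → ℝ := fun j => f (x j) - f xstar with hδ
  have hδdef : ∀ j, δ j = f (x j) - f xstar := fun j => rfl
  show δ (2 * K) ≤ 2 * min (L 0) (L 1) * Ra ^ 2 / ((K : ℝ) - 1)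
  by_cases htriv : δ (2 * K) ≤ 0
  · refine le_trans htriv ?_
    positivity
  push_neg at htriv
  -- one-step monotonicity
  have hmono : ∀ i < 2 * K, f (x (i + 1)) ≤ f (x i) := by
    intro i hi
    exact (hstep i hi).2 ⟨0, by rw [inj_zero, add_zero]⟩
  have hmono' : ∀ j, j ≤ 2 * K → ∀ i, i ≤ j → f (x j) ≤ f (x i) := by
    intro j
    induction j with
    | zero => intro _ i hi; interval_cases i; exact le_rfl
    | succ n ih =>
      intro hj i hi
      rcases Nat.lt_or_ge i (n + 1) with h' | h'
      · exact le_trans (hmono n (by omega)) (ih (by omega) i (by omega))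
      · have : i = n + 1 := by omega
        rw [this]
  have hδpos : ∀ j, j ≤ 2 * K → 0 < δ j := by
    intro j hj
    calc (0:ℝ) < δ (2 * K) := htriv
      _ ≤ δ j := sub_le_sub_right (hmono' (2 * K) le_rfl j hj) _
  -- gradient of freshly minimized block vanishes
  have hgz : ∀ i, i < 2 * K → gradient f (x (i + 1)) (blkIdx2 i) = 0 := by
    intro i hi
    obtain ⟨h₀, hx0⟩ := (hstep i hi).1
    apply grad_zero hdiff
    intro h
    exact (hstep i hi).2 ⟨h₀ + h, by rw [inj_add, ← add_assoc, ← hx0]⟩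
  have hgother : ∀ j, 1 ≤ j → j ≤ 2 * K → ∀ m : Fin 2, m ≠ blkIdx2 j →
      gradient f (x j) m = 0 := by
    intro j h1 h2 m hm
    have hj : j - 1 + 1 = j := by omega
    have hmeq : m = blkIdx2 (j - 1) := by
      apply Fin.ext
      have h3 := m.isLt
      have h4 : m.val ≠ (blkIdx2 j).val := fun hc => hm (Fin.ext hc)
      simp only [blkIdx2] at h4 ⊢
      omega
    rw [hmeq, ← hj]
    exact hgz (j - 1) (by omega)
  -- inequality A : δ j ≤ ‖G_j‖ * Ra
  have hA : ∀ j, 2 ≤ j → j < 2 * K → δ j ≤ ‖gradient f (x j) (blkIdx2 j)‖ * Ra := by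
    intro j h2j hj2K
    have hcomp : ‖(x j - xstar) (blkIdx2 j)‖ ≤ Ra := by
      rcases Nat.even_or_odd j with he | ho
      · obtain ⟨k, hk⟩ := he
        have hk' : j = 2 * k := by omega
        calc ‖(x j - xstar) (blkIdx2 j)‖ ≤ ‖x j - xstar‖ := norm_apply_le _ _
          _ ≤ Ra := by rw [hk']; exact hbound k (by omega) (by omega)
      · obtain ⟨k, hk⟩ := ho
        obtain ⟨h, hxh⟩ := (hstep (2 * k) (by omega)).1
        have hne : blkIdx2 j ≠ blkIdx2 (2 * k) := by
          rw [hk, blkIdx2_two_mul, blkIdx2_two_mul_add_one]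
          decide
        have hcompeq : (x j - xstar) (blkIdx2 j) = (x (2 * k) - xstar) (blkIdx2 j) := by
          have : x j = x (2 * k) + inj d (blkIdx2 (2 * k)) h := by rw [hk]; exact hxh
          rw [this]
          show x (2 * k) (blkIdx2 j) + inj d (blkIdx2 (2 * k)) h (blkIdx2 j)
              - xstar (blkIdx2 j) = x (2 * k) (blkIdx2 j) - xstar (blkIdx2 j)
          rw [inj_apply_ne hne, add_zero]
        rw [hcompeq]
        calc ‖(x (2 * k) - xstar) (blkIdx2 j)‖ ≤ ‖x (2 * k) - xstar‖ := norm_apply_le _ _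
          _ ≤ Ra := hbound k (by omega) (by omega)
    have hcl := convex_lower hconv hdiff (x j) xstar
    have hcases : ∀ m : Fin 2, m = 0 ∨ m = 1 := by decide
    have hinner : ⟪gradient f (x j), x j - xstar⟫
        = ⟪gradient f (x j) (blkIdx2 j), (x j - xstar) (blkIdx2 j)⟫ := by
      rw [PiLp.inner_apply, Fin.sum_univ_two]
      rcases hcases (blkIdx2 j) with h0 | h0 <;> rw [h0]
      · have hz : gradient f (x j) 1 = 0 := by
          apply hgother j (by omega) (by omega)
          rw [h0]; decide
        rw [hz, inner_zero_left, add_zero]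
      · have hz : gradient f (x j) 0 = 0 := by
          apply hgother j (by omega) (by omega)
          rw [h0]; decide
        rw [hz, inner_zero_left, zero_add]
    have hswap : ⟪gradient f (x j), xstar - x j⟫ = -⟪gradient f (x j), x j - xstar⟫ := by
      rw [← inner_neg_right, neg_sub]
    calc δ j = f (x j) - f xstar := hδdef j
      _ ≤ ⟪gradient f (x j), x j - xstar⟫ := by
          rw [hswap] at hcl; linarith
      _ = ⟪gradient f (x j) (blkIdx2 j), (x j - xstar) (blkIdx2 j)⟫ := hinner
      _ ≤ ‖gradient f (x j) (blkIdx2 j)‖ * ‖(x j - xstar) (blkIdx2 j)‖ :=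
          real_inner_le_norm _ _
      _ ≤ ‖gradient f (x j) (blkIdx2 j)‖ * Ra :=
          mul_le_mul_of_nonneg_left hcomp (norm_nonneg _)
  -- inequality B : sufficient decrease
  have hB : ∀ j, j < 2 * K →
      ‖gradient f (x j) (blkIdx2 j)‖ ^ 2 / (2 * L (blkIdx2 j)) ≤ δ j - δ (j + 1) := by
    intro j hj
    set ℓ := blkIdx2 j with hℓ
    set G := gradient f (x j) ℓ with hGdef
    have hLp := hL ℓ
    have hdesc := descent hdiff ℓ (fun z h => hlip ℓ z h) (x j) (-(L ℓ)⁻¹ • G)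
    have hle : f (x (j + 1)) ≤ f (x j + inj d ℓ (-(L ℓ)⁻¹ • G)) :=
      isMinOn_iff.mp (hstep j hj).2 _ ⟨-(L ℓ)⁻¹ • G, rfl⟩
    have e1 : ⟪G, (-(L ℓ)⁻¹ : ℝ) • G⟫ = -(L ℓ)⁻¹ * ‖G‖ ^ 2 := by
      rw [real_inner_smul_right, real_inner_self_eq_norm_sq]
    have e2 : ‖(-(L ℓ)⁻¹ : ℝ) • G‖ ^ 2 = ((L ℓ)⁻¹) ^ 2 * ‖G‖ ^ 2 := by
      rw [norm_smul, Real.norm_eq_abs, abs_neg, abs_inv, abs_of_pos hLp]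
      ring
    rw [e1, e2] at hdesc
    have e3 : (L ℓ) / 2 * (((L ℓ)⁻¹) ^ 2 * ‖G‖ ^ 2) - (L ℓ)⁻¹ * ‖G‖ ^ 2
        = -(‖G‖ ^ 2 / (2 * L ℓ)) := by
      field_simp
      ring
    have hle' := le_trans hle hdesc
    rw [hδdef, hδdef]
    linarith
  -- key per-step inequality on inverses
  have hkey : ∀ j, 2 ≤ j → j < 2 * K →
      1 / δ j + 1 / (2 * L (blkIdx2 j) * Ra ^ 2) ≤ 1 / δ (j + 1) := by
    intro j h2 hj
    have hLp := hL (blkIdx2 j)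
    have pj := hδpos j (by omega)
    have pj1 := hδpos (j + 1) (by omega)
    have hle : δ (j + 1) ≤ δ j := sub_le_sub_right (hmono j hj) _
    have ha := hA j h2 hj
    have hb := hB j hj
    have hgnn : 0 ≤ ‖gradient f (x j) (blkIdx2 j)‖ := norm_nonneg _
    have hg2 : δ j ^ 2 ≤ ‖gradient f (x j) (blkIdx2 j)‖ ^ 2 * Ra ^ 2 := by
      nlinarith
    have hdec : δ j ^ 2 / (2 * L (blkIdx2 j) * Ra ^ 2) ≤ δ j - δ (j + 1) := by
      refine le_trans ?_ hb
      rw [div_le_div_iff₀ (by positivity) (by positivity)]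
      nlinarith [mul_le_mul_of_nonneg_right hg2 (le_of_lt hLp)]
    exact arith pj pj1 (by positivity) hle hdec
  -- blkIdx2 values
  -- induction over cycles
  have hind : ∀ k, 1 ≤ k → k ≤ K →
      ((k : ℝ) - 1) * (1 / (2 * L 0 * Ra ^ 2) + 1 / (2 * L 1 * Ra ^ 2)) ≤ 1 / δ (2 * k) := by
    intro k
    induction k with
    | zero => intro h; omega
    | succ n ih =>
      intro _ hkK
      rcases Nat.eq_zero_or_pos n with rfl | hn
      · have h2pos : 0 < δ (2 * (0 + 1)) := hδpos _ (by omega)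
        have hz : (((0:ℕ) + 1 : ℕ) : ℝ) - 1 = 0 := by norm_num
        rw [hz, zero_mul]
        exact le_of_lt (one_div_pos.mpr h2pos)
      · have ihn := ih (by omega) (by omega)
        have hk1' := hkey (2 * n) (by omega) (by omega)
        have hk2' := hkey (2 * n + 1) (by omega) (by omega)
        rw [blkIdx2_two_mul] at hk1'
        rw [blkIdx2_two_mul_add_one] at hk2'
        have hrw : 2 * (n + 1) = 2 * n + 1 + 1 := by ring
        rw [hrw]
        push_cast
        push_cast at ihn
        linarith
  have hfin := hind K (by omega) le_rfl
  have hsum : 1 / (2 * min (L 0) (L 1) * Ra ^ 2)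
      ≤ 1 / (2 * L 0 * Ra ^ 2) + 1 / (2 * L 1 * Ra ^ 2) := by
    have hp0 : (0:ℝ) < 1 / (2 * L 0 * Ra ^ 2) := by have := hL 0; positivity
    have hp1 : (0:ℝ) < 1 / (2 * L 1 * Ra ^ 2) := by have := hL 1; positivity
    rcases min_cases (L 0) (L 1) with ⟨h, _⟩ | ⟨h, _⟩ <;> rw [h] <;> linarith
  have hfin2 : ((K : ℝ) - 1) / (2 * min (L 0) (L 1) * Ra ^ 2) ≤ 1 / δ (2 * K) := by
    calc ((K : ℝ) - 1) / (2 * min (L 0) (L 1) * Ra ^ 2)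
        = ((K : ℝ) - 1) * (1 / (2 * min (L 0) (L 1) * Ra ^ 2)) := by ring
      _ ≤ ((K : ℝ) - 1) * (1 / (2 * L 0 * Ra ^ 2) + 1 / (2 * L 1 * Ra ^ 2)) := by
          apply mul_le_mul_of_nonneg_left hsum (by linarith)
      _ ≤ 1 / δ (2 * K) := hfin
  have hCpos : (0:ℝ) < 2 * min (L 0) (L 1) * Ra ^ 2 := by positivity
  rw [div_le_div_iff₀ hCpos (hδpos (2 * K) le_rfl)] at hfin2
  rw [le_div_iff₀ hKpos]
  nlinarith [hfin2]
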